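/- There exists a pair of rotations A, B ∈ SO(3) generating a free subgroup of rank two. -/

import Mathlib

open Matrix MeasureTheory

noncomputable instance : MeasurableSpace (Matrix (Fin 3) (Fin 3) ℝ) :=
  MeasurableSpace.pi (m := fun _ : Fin 3 => MeasurableSpace.pi)

/-- `SO(3)`: the subgroup of the real orthogonal group of elements of determinant one. -/
noncomputable def SO3 : Subgroup (Matrix.unitaryGroup (Fin 3) ℝ) where
  carrier := {A | (A : Matrix (Fin 3) (Fin 3) ℝ).det = 1}
  mul_mem' := by
    intro a b ha hb
    simp only [Set.mem_setOf_eq, Submonoid.coe_mul, Matrix.det_mul] at *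
    rw [ha, hb, mul_one]
  one_mem' := by simp
  inv_mem' := by
    intro a ha
    simp only [Set.mem_setOf_eq] at *
    have : ((a⁻¹ : Matrix.unitaryGroup (Fin 3) ℝ) : Matrix (Fin 3) (Fin 3) ℝ)
        = star (a : Matrix (Fin 3) (Fin 3) ℝ) := rfl
    rw [this, Matrix.star_eq_conjTranspose, Matrix.det_conjTranspose, ha, star_one]

/-- The underlying `3 × 3` matrix of an element of `SO(3)`. -/
noncomputable def SO3.mat (a : SO3) : Matrix (Fin 3) (Fin 3) ℝ := a.1.1

/-- The length `|I_m| = Σ_p (|s_p| + |r_p|)` of the word with multi-index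
`I_m = ((s_1, r_1), …, (s_m, r_m))`. -/
def wordLen (l : List (ℤ × ℤ)) : ℕ := (l.map fun p => p.1.natAbs + p.2.natAbs).sum

/-- The word `A^{s_1} B^{r_1} ⋯ A^{s_m} B^{r_m}`. -/
noncomputable def wordEval {G : Type*} [Group G] (A B : G) (l : List (ℤ × ℤ)) : G :=
  (l.map fun p => A ^ p.1 * B ^ p.2).prod

attribute [local instance] Matrix.frobeniusNormedAddCommGroup

/-! ### Auxiliary development: a concrete free pair of rotations.

We use the rotations by `arccos (3/5)` about the `z`- and `x`-axes.  Scaled by `5`, these are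
integer matrices, and a mod-5 analysis of the middle coordinate of the image of `(0,1,0)`
shows that no nonempty reduced word in them is the identity (Świerczkowski's argument). -/

/-- The four integer matrices `5·A`, `5·A⁻¹`, `5·B`, `5·B⁻¹`. -/
def zMat : Bool × Bool → Matrix (Fin 3) (Fin 3) ℤ
  | (true, true)   => !![3,-4,0; 4,3,0; 0,0,5]
  | (true, false)  => !![3,4,0; -4,3,0; 0,0,5]
  | (false, true)  => !![5,0,0; 0,3,-4; 0,4,3]
  | (false, false) => !![5,0,0; 0,3,4; 0,-4,3]

/-- The corresponding real rotation matrices. -/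
noncomputable def rMat (p : Bool × Bool) : Matrix (Fin 3) (Fin 3) ℝ :=
  ((5:ℝ)⁻¹) • (zMat p).map (Int.cast : ℤ → ℝ)

lemma cast_zMat (p : Bool × Bool) :
    (zMat p).map (Int.cast : ℤ → ℝ) = (5:ℝ) • rMat p := by
  rw [rMat, smul_smul]; norm_num

lemma rMat_unitary (b : Bool) : rMat (b, true) ∈ Matrix.unitaryGroup (Fin 3) ℝ := by
  rw [Matrix.mem_unitaryGroup_iff]
  cases b <;>
  · ext i j
    fin_cases i <;> fin_cases j <;>
      simp [rMat, zMat, Matrix.mul_apply, Fin.sum_univ_three, Matrix.star_eq_conjTranspose,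
        Matrix.conjTranspose_apply, Matrix.map_apply] <;>
      norm_num

lemma rMat_det (b : Bool) : (rMat (b, true)).det = 1 := by
  cases b <;>
  · rw [Matrix.det_fin_three]
    simp [rMat, zMat, Matrix.map_apply]
    norm_num

/-- The two generating rotations as elements of `SO(3)`. -/
noncomputable def gen (b : Bool) : SO3 :=
  ⟨⟨rMat (b, true), rMat_unitary b⟩, rMat_det b⟩

lemma rMat_transpose (b : Bool) : (rMat (b, true))ᵀ = rMat (b, false) := by
  cases b <;>
  · ext i j
    fin_cases i <;> fin_cases j <;>
      simp [rMat, zMat, Matrix.transpose_apply, Matrix.map_apply, Matrix.vecHead, Matrix.vecTail]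

/-- The monoid homomorphism sending an element of `SO(3)` to its matrix. -/
noncomputable def matHom : SO3 →* Matrix (Fin 3) (Fin 3) ℝ :=
  ((unitary (Matrix (Fin 3) (Fin 3) ℝ)).subtype).comp SO3.subtype

lemma matHom_gen (p : Bool × Bool) :
    matHom (cond p.2 (gen p.1) (gen p.1)⁻¹) = rMat p := by
  obtain ⟨b, s⟩ := p
  cases s
  · show matHom (gen b)⁻¹ = rMat (b, false)
    have : matHom (gen b)⁻¹ = star (rMat (b, true)) := rfl
    rw [this, Matrix.star_eq_conjTranspose]
    simpa [Matrix.conjTranspose_eq_transpose_of_trivial] using rMat_transpose b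
  · rfl

/-- The mod-5 reductions of the four integer matrices. -/
def zmod5 (p : Bool × Bool) : Matrix (Fin 3) (Fin 3) (ZMod 5) :=
  (zMat p).map (Int.cast : ℤ → ZMod 5)

lemma zmod5_eq (p : Bool × Bool) : zmod5 p = match p with
  | (true, true)   => !![3,1,0; 4,3,0; 0,0,0]
  | (true, false)  => !![3,4,0; 1,3,0; 0,0,0]
  | (false, true)  => !![0,0,0; 0,3,1; 0,4,3]
  | (false, false) => !![0,0,0; 0,3,4; 0,1,3] := by
  obtain ⟨b, s⟩ := p
  cases b <;> cases s <;>
  · ext i j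
    fin_cases i <;> fin_cases j <;> simp [zmod5, zMat, Matrix.map_apply] <;> decide

/-- The image of `(0,1,0)` under a word, mod 5. -/
def vec (L : List (Bool × Bool)) : Fin 3 → ZMod 5 :=
  ((L.map zmod5).prod) *ᵥ ![0,1,0]

lemma vec_cons (p : Bool × Bool) (L : List (Bool × Bool)) :
    vec (p :: L) = zmod5 p *ᵥ vec L := by
  simp [_root_.vec, Matrix.mulVec_mulVec]

/-- The invariant attached to the leading letter of a reduced word. -/
def LInv (p : Bool × Bool) (v : Fin 3 → ZMod 5) : Prop :=
  v 1 ≠ 0 ∧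
  match p with
  | (true, true)   => v 0 = 2 * v 1 ∧ v 2 = 0
  | (true, false)  => v 0 = -2 * v 1 ∧ v 2 = 0
  | (false, true)  => v 0 = 0 ∧ v 2 = -2 * v 1
  | (false, false) => v 0 = 0 ∧ v 2 = 2 * v 1

lemma mulVec_comp (p : Bool × Bool) (v : Fin 3 → ZMod 5) :
    zmod5 p *ᵥ v = match p with
  | (true, true)   => ![3*v 0 + v 1, 4*v 0 + 3*v 1, 0]
  | (true, false)  => ![3*v 0 + 4*v 1, v 0 + 3*v 1, 0]
  | (false, true)  => ![0, 3*v 1 + v 2, 4*v 1 + 3*v 2]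
  | (false, false) => ![0, 3*v 1 + 4*v 2, v 1 + 3*v 2] := by
  obtain ⟨b, s⟩ := p
  cases b <;> cases s <;>
  · rw [zmod5_eq]
    funext i
    fin_cases i <;>
      simp [Matrix.mulVec, dotProduct, Fin.sum_univ_three, Matrix.vecHead, Matrix.vecTail]

lemma reduced_cons {p : Bool × Bool} {L : List (Bool × Bool)}
    (h : FreeGroup.reduce (p :: L) = p :: L) :
    FreeGroup.reduce L = L ∧ ∀ q ∈ L.head?, ¬(p.1 = q.1 ∧ p.2 = !q.2) := by
  have hlen : (FreeGroup.reduce L).length ≤ L.length :=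
    FreeGroup.Red.length_le (FreeGroup.reduce.red)
  rw [FreeGroup.reduce.cons] at h
  cases hr : FreeGroup.reduce L with
  | nil =>
    rw [hr] at h
    simp only at h
    have : L = [] := by
      have := congrArg List.tail h
      simpa using this.symm
    subst this
    simp
  | cons q T =>
    rw [hr] at h
    simp only at h
    split_ifs at h with hc
    · exfalso
      rw [hr] at hlen
      have h1 := congrArg List.length h
      simp only [List.length_cons] at h1 hlen
      omega
    · have hL : L = q :: T := by
        have := congrArg List.tail h
        simpa using this.symm
      constructor
      · exact hL.symm
      · intro r hr'
        rw [hL] at hr'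
        simp only [List.head?_cons, Option.mem_some_iff] at hr'
        subst hr'
        exact hc

lemma key : ∀ (L : List (Bool × Bool)) (p : Bool × Bool),
    FreeGroup.reduce (p :: L) = p :: L → LInv p (vec (p :: L)) := by
  intro L
  induction L with
  | nil =>
    intro p _
    obtain ⟨b, s⟩ := p
    cases b <;> cases s <;> (unfold LInv _root_.vec zmod5 zMat; decide)
  | cons q T ih =>
    intro p hred
    obtain ⟨hL, hq⟩ := reduced_cons hred
    have hIq := ih q hL
    have hne : ¬(p.1 = q.1 ∧ p.2 = !q.2) := hq q rfl
    rw [vec_cons, mulVec_comp]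
    revert hIq
    generalize vec (q :: T) = v
    intro hIq
    obtain ⟨pb, ps⟩ := p
    obtain ⟨qb, qs⟩ := q
    cases pb <;> cases ps <;> cases qb <;> cases qs <;>
      first
      | (exfalso; apply hne; exact And.intro rfl rfl)
      | (unfold LInv at hIq ⊢
         simp only [Matrix.cons_val_zero, Matrix.cons_val_one, Matrix.head_cons,
          Matrix.cons_val_two, Matrix.tail_cons] at hIq ⊢
         revert hIq
         generalize v 0 = x
         generalize v 1 = y
         generalize v 2 = z
         revert x y z
         decide)

lemma prod_cast_real (L : List (Bool × Bool)) :
    ((L.map zMat).prod).map (Int.cast : ℤ → ℝ)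
      = (5:ℝ) ^ L.length • (L.map rMat).prod := by
  induction L with
  | nil => simp [Matrix.map_one (Int.cast : ℤ → ℝ) Int.cast_zero Int.cast_one]
  | cons p L ih =>
    simp only [List.map_cons, List.prod_cons, List.length_cons]
    rw [show ((zMat p * (L.map zMat).prod).map (Int.cast : ℤ → ℝ))
        = (zMat p).map (Int.cast : ℤ → ℝ) * ((L.map zMat).prod).map (Int.cast : ℤ → ℝ) from
      Matrix.map_mul (f := Int.castRingHom ℝ), ih, cast_zMat]
    rw [Matrix.smul_mul, Matrix.mul_smul, smul_smul, pow_succ]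
    ring_nf

lemma prod_cast_zmod (L : List (Bool × Bool)) :
    ((L.map zMat).prod).map (Int.cast : ℤ → ZMod 5) = (L.map zmod5).prod := by
  induction L with
  | nil => simp [Matrix.map_one (Int.cast : ℤ → ZMod 5) Int.cast_zero Int.cast_one]
  | cons p L ih =>
    simp only [List.map_cons, List.prod_cons]
    rw [show ((zMat p * (L.map zMat).prod).map (Int.cast : ℤ → ZMod 5))
        = (zMat p).map (Int.cast : ℤ → ZMod 5) * ((L.map zMat).prod).map (Int.cast : ℤ → ZMod 5)
        from Matrix.map_mul (f := Int.castRingHom (ZMod 5)), ih]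
    rfl

/-- There exists a pair of rotations `A, B ∈ SO(3)` generating a free subgroup of rank two,
i.e. such that the canonical homomorphism from the free group on two generators sending the
generators to `A` and `B` is injective. -/
theorem stmt_4 :
    ∃ A B : SO3, Function.Injective ⇑(FreeGroup.lift (fun b : Bool => if b then A else B)) := by
  refine ⟨gen true, gen false, ?_⟩
  have hfun : (fun b : Bool => if b then gen true else gen false) = gen := by
    funext b; cases b <;> rfl
  rw [hfun]
  rw [injective_iff_map_eq_one]
  intro w hw
  by_contra hw1
  set L := w.toWord with hLdef
  have hL : FreeGroup.reduce L = L := FreeGroup.reduce_toWord w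
  have hnil : L ≠ [] := fun h => hw1 (FreeGroup.toWord_eq_nil_iff.mp h)
  -- the product of the real matrices along `L` is the identity
  have hw' : (L.map fun x => cond x.2 (gen x.1) (gen x.1)⁻¹).prod = 1 := by
    rw [← FreeGroup.lift_mk]
    rw [hLdef, FreeGroup.mk_toWord]
    exact hw
  have hreal : (L.map rMat).prod = 1 := by
    have := congrArg matHom hw'
    rw [map_list_prod, MonoidHom.map_one] at this
    rw [← this, List.map_map]
    exact congrArg List.prod (List.map_congr_left fun p _ => (matHom_gen p).symm)
  -- hence the integer product is `5 ^ |L|` times the identity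
  have hint : (L.map zMat).prod = (5 ^ L.length : ℤ) • 1 := by
    have h1 := prod_cast_real L
    rw [hreal] at h1
    ext i j
    have h2 := congrFun (congrFun h1 i) j
    simp only [Matrix.map_apply, Matrix.smul_apply, Matrix.one_apply, smul_eq_mul] at h2
    simp only [Matrix.smul_apply, Matrix.one_apply, smul_eq_mul]
    by_cases hij : i = j <;> simp [hij] at h2 ⊢ <;> exact_mod_cast h2
  -- so the mod-5 product vanishes
  have hzmod : (L.map zmod5).prod = 0 := by
    rw [← prod_cast_zmod, hint]
    have h5 : (((5:ℤ) ^ L.length : ℤ) : ZMod 5) = 0 := by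
      push_cast
      rw [show ((5:ZMod 5)) = 0 from rfl]
      exact zero_pow (by simpa [List.length_eq_zero_iff] using hnil)
    ext i j
    simp only [Matrix.smul_apply, Matrix.one_apply, smul_eq_mul, Matrix.map_apply,
      Matrix.zero_apply]
    rw [Int.cast_mul, h5, zero_mul]
  -- contradiction with the key invariant
  obtain ⟨p, L', hPL⟩ : ∃ p L', L = p :: L' := by
    cases hL' : L with
    | nil => exact absurd hL' hnil
    | cons a T => exact ⟨a, T, rfl⟩
  rw [hPL] at hL hzmod
  have hinv := key L' p hL
  have : vec (p :: L') 1 = 0 := by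
    rw [_root_.vec, hzmod]
    simp
  exact hinv.1 this
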